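/- Let C₀ = 0.16, r₀ = 0.4, and L(1) = (1/32)(2 − 2ψ(C₀r + 1.35r)) + (65/100 + 1/160)(2 − 2ψ(C₀r + 0.35r)) + (35/100 + 9/160)(2 − 2ψ(C₀r + 0.65r)) + (1/32)(2 − 2ψ(C₀r + 1.65r)) with ψ(s) = s/tan(s). Then for all 0 < r ≤ r₀: (2/(2 − L(1)))·((1/8)C₀ + 53/400) < C₀ and (2/(2 − L(1)))·((1/16)C₀ + 53/400) < 0.15. -/

import Mathlib

set_option maxHeartbeats 1000000


/-- `ψ(s) = s / tan s`, with `ψ(0) = 1`. -/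
noncomputable def psi (s : ℝ) : ℝ := if s = 0 then 1 else s / Real.tan s

lemma psi_bounds {s : ℝ} (h0 : 0 < s) (h1 : s ≤ 0.73) :
    1 - 0.475 * s ^ 2 ≤ psi s ∧ psi s ≤ 1 := by
  have hpi : s < Real.pi / 2 := by
    have := Real.pi_gt_three
    linarith
  have htan : s < Real.tan s := Real.lt_tan h0 hpi
  have htanpos : 0 < Real.tan s := lt_trans h0 htan
  have hcospos : 0 < Real.cos s := Real.cos_pos_of_mem_Ioo ⟨by linarith, hpi⟩
  have hsinpos : 0 < Real.sin s := Real.sin_pos_of_pos_of_lt_pi h0 (by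
    have := Real.pi_gt_three; linarith)
  have habs : |s| ≤ 1 := by rw [abs_of_pos h0]; linarith
  have hcb := abs_le.mp (Real.cos_bound habs)
  have hsb := abs_le.mp (Real.sin_bound habs)
  rw [abs_of_pos h0] at hcb hsb
  have hcos : 1 - s ^ 2 / 2 - s ^ 4 * (5 / 96) ≤ Real.cos s := by linarith [hcb.2]
  have hsin : Real.sin s ≤ s - s ^ 3 / 6 + s ^ 4 * (5 / 96) := by
    nlinarith [hsb.2, pow_pos h0 4, mul_nonneg (pow_pos h0 4).le (by linarith : (0:ℝ) ≤ 1 - s)]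
  have hne : s ≠ 0 := ne_of_gt h0
  rw [psi, if_neg hne]
  constructor
  · rw [le_div_iff₀ htanpos, Real.tan_eq_sin_div_cos, ← mul_div_assoc,
      div_le_iff₀ hcospos]
    have hfac : 0 ≤ 1 - 0.475 * s ^ 2 := by nlinarith
    have key : (1 - 0.475 * s ^ 2) * Real.sin s ≤
        (1 - 0.475 * s ^ 2) * (s - s ^ 3 / 6 + s ^ 4 * (5 / 96)) :=
      mul_le_mul_of_nonneg_left hsin hfac
    have key2 : s * (1 - s ^ 2 / 2 - s ^ 4 * (5 / 96)) ≤ s * Real.cos s :=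
      mul_le_mul_of_nonneg_left hcos (le_of_lt h0)
    have hd : (0:ℝ) ≤ 0.73 - s := by linarith
    nlinarith [mul_nonneg (pow_pos h0 3).le hd, mul_nonneg (pow_pos h0 4).le hd,
      mul_nonneg (pow_pos h0 5).le hd, pow_pos h0 3, pow_pos h0 5]
  · rw [div_le_one htanpos]
    exact le_of_lt htan

theorem stmt_18 :
    let C₀ : ℝ := 0.16
    let r₀ : ℝ := 0.4
    ∀ r : ℝ, 0 < r → r ≤ r₀ →
      let L1 : ℝ :=
        (1/32) * (2 - 2 * psi (C₀ * r + 1.35 * r))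
          + (65/100 + 1/160) * (2 - 2 * psi (C₀ * r + 0.35 * r))
          + (35/100 + 9/160) * (2 - 2 * psi (C₀ * r + 0.65 * r))
          + (1/32) * (2 - 2 * psi (C₀ * r + 1.65 * r))
      2 / (2 - L1) * ((1/8) * C₀ + 53/400) < C₀ ∧
      2 / (2 - L1) * ((1/16) * C₀ + 53/400) < 0.15 := by
  intro C₀ r₀ r hr hr' L1
  have hC : C₀ = 0.16 := rfl
  have hr0 : r₀ = 0.4 := rfl
  rw [hr0] at hr'
  have hb1 := psi_bounds (s := C₀ * r + 1.35 * r) (by rw [hC]; linarith) (by rw [hC]; linarith)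
  have hb2 := psi_bounds (s := C₀ * r + 0.35 * r) (by rw [hC]; linarith) (by rw [hC]; linarith)
  have hb3 := psi_bounds (s := C₀ * r + 0.65 * r) (by rw [hC]; linarith) (by rw [hC]; linarith)
  have hb4 := psi_bounds (s := C₀ * r + 1.65 * r) (by rw [hC]; linarith) (by rw [hC]; linarith)
  rw [hC] at hb1 hb2 hb3 hb4
  have hr2 : r ^ 2 ≤ 0.16 := by nlinarith
  have t1 : 2 - 2 * psi (0.16 * r + 1.35 * r) ≤ 0.95 * 1.51 ^ 2 * r ^ 2 := by
    nlinarith [hb1.1]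
  have t2 : 2 - 2 * psi (0.16 * r + 0.35 * r) ≤ 0.95 * 0.51 ^ 2 * r ^ 2 := by
    nlinarith [hb2.1]
  have t3 : 2 - 2 * psi (0.16 * r + 0.65 * r) ≤ 0.95 * 0.81 ^ 2 * r ^ 2 := by
    nlinarith [hb3.1]
  have t4 : 2 - 2 * psi (0.16 * r + 1.65 * r) ≤ 0.95 * 1.81 ^ 2 * r ^ 2 := by
    nlinarith [hb4.1]
  have hL1 : L1 ≤ 0.093 := by
    simp only [L1, hC]
    linarith
  have hL0 : 0 ≤ L1 := by
    simp only [L1, hC]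
    linarith [hb1.2, hb2.2, hb3.2, hb4.2]
  clear_value L1
  have hpos : 0 < 2 - L1 := by linarith
  refine ⟨?_, ?_⟩
  · rw [div_mul_eq_mul_div, div_lt_iff₀ hpos, hC]
    linarith
  · rw [div_mul_eq_mul_div, div_lt_iff₀ hpos, hC]
    linarith
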